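/- Let G be a connected graph on m vertices and H a connected graph on n vertices, and let c be an exact r-coloring of G □ H with no rainbow 3-APs. If G_1,...,G_n are the labeled copies of G in G □ H, then |c(V(G_j)) \ c(V(G_i))| ≤ 1 for all 1 ≤ i, j ≤ n. -/

import Mathlib

open SimpleGraph

/-- A rainbow 3-AP in `G` under coloring `c`: three vertices with
`d(v₁,v₂) = d(v₂,v₃)` receiving pairwise distinct colors. -/
def HasRainbow3AP {V C : Type*} (G : SimpleGraph V) (c : V → C) : Prop :=
  ∃ v₁ v₂ v₃ : V, G.dist v₁ v₂ = G.dist v₂ v₃ ∧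
    c v₁ ≠ c v₂ ∧ c v₂ ≠ c v₃ ∧ c v₁ ≠ c v₃

/-- The anti-van der Waerden number `aw(G,3)`: the least positive `r` such that
every surjective coloring with `r` colors yields a rainbow 3-AP. -/
noncomputable def aw {V : Type*} (G : SimpleGraph V) : ℕ :=
  sInf {r : ℕ | 0 < r ∧ ∀ c : V → Fin r, Function.Surjective c → HasRainbow3AP G c}

section Aux

variable {V W : Type*} {G : SimpleGraph V} {H : SimpleGraph W}

private lemma aux_dist_le_walk (hG : G.Connected) (hH : H.Connected) :
    ∀ {x y : V × W} (p : (G □ H).Walk x y),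
      G.dist x.1 y.1 + H.dist x.2 y.2 ≤ p.length := by
  intro x y p
  induction p with
  | nil => simp
  | @cons x z y hadj q ih =>
    rcases boxProd_adj.mp hadj with ⟨hA, he⟩ | ⟨hA, he⟩
    · have h1 : G.dist x.1 y.1 ≤ G.dist x.1 z.1 + G.dist z.1 y.1 := hG.dist_triangle
      have h2 : G.dist x.1 z.1 = 1 := dist_eq_one_iff_adj.mpr hA
      have h3 : H.dist x.2 y.2 = H.dist z.2 y.2 := by rw [he]
      simp only [Walk.length_cons]
      omega
    · have h1 : H.dist x.2 y.2 ≤ H.dist x.2 z.2 + H.dist z.2 y.2 := hH.dist_triangle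
      have h2 : H.dist x.2 z.2 = 1 := dist_eq_one_iff_adj.mpr hA
      have h3 : G.dist x.1 y.1 = G.dist z.1 y.1 := by rw [he]
      simp only [Walk.length_cons]
      omega

private lemma boxProd_dist_eq (hG : G.Connected) (hH : H.Connected)
    (u v : V) (g h : W) :
    (G □ H).dist (u, g) (v, h) = G.dist u v + H.dist g h := by
  apply le_antisymm
  · obtain ⟨p, hp⟩ := hG.exists_walk_length_eq_dist u v
    obtain ⟨q, hq⟩ := hH.exists_walk_length_eq_dist g h
    have hle := SimpleGraph.dist_le ((p.boxProdLeft H g).append (q.boxProdRight G v))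
    rwa [Walk.length_append,
      show (p.boxProdLeft H g).length = p.length from Walk.length_map _ _,
      show (q.boxProdRight G v).length = q.length from Walk.length_map _ _, hp, hq] at hle
  · obtain ⟨w, hw⟩ := (hG.boxProd hH).exists_walk_length_eq_dist (u, g) (v, h)
    have := aux_dist_le_walk hG hH w
    rwa [hw] at this

private lemma aux_dist_getVert_le (hG : G.Connected) :
    ∀ {u v : V} (p : G.Walk u v) (k : ℕ), G.dist u (p.getVert k) ≤ k := by
  intro u v p
  induction p with
  | nil => intro k; simp [Walk.getVert_of_length_le, SimpleGraph.dist_self]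
  | @cons a b c' hadj q ih =>
    intro k
    cases k with
    | zero => simp
    | succ k =>
      have h1 : G.dist a (q.getVert k) ≤ G.dist a b + G.dist b (q.getVert k) :=
        hG.dist_triangle
      have h2 : G.dist a b = 1 := dist_eq_one_iff_adj.mpr hadj
      have h3 := ih k
      have h4 : (Walk.cons hadj q).getVert (k + 1) = q.getVert k := rfl
      rw [h4]
      omega

private lemma aux_dist_getVert_right_le (hG : G.Connected) :
    ∀ {u v : V} (p : G.Walk u v) (k : ℕ), G.dist (p.getVert k) v ≤ p.length - k := by
  intro u v p
  induction p with
  | nil => intro k; simp [Walk.getVert_of_length_le, SimpleGraph.dist_self]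
  | @cons a b c' hadj q ih =>
    intro k
    cases k with
    | zero =>
      have h1 : G.dist a c' ≤ G.dist a b + G.dist b c' := hG.dist_triangle
      have h2 : G.dist a b = 1 := dist_eq_one_iff_adj.mpr hadj
      have h3 : G.dist b c' ≤ q.length := SimpleGraph.dist_le q
      simp only [Walk.getVert_zero, Walk.length_cons]
      omega
    | succ k =>
      have h3 := ih k
      have h4 : (Walk.cons hadj q).getVert (k + 1) = q.getVert k := rfl
      simp only [Walk.length_cons, h4]
      omega

end Aux

theorem stmt_5 {V W : Type*} [Fintype V] [Fintype W]
    (G : SimpleGraph V) (H : SimpleGraph W)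
    (hG : G.Connected) (hH : H.Connected)
    (r : ℕ) (c : V × W → Fin r) (hc : Function.Surjective c)
    (hrf : ¬ HasRainbow3AP (G □ H) c) (i j : W) :
    ((Finset.univ.image (fun u : V => c (u, j))) \
      (Finset.univ.image (fun u : V => c (u, i)))).card ≤ 1 := by
  rw [Finset.card_le_one]
  intro a ha b hb
  by_contra hab
  simp only [Finset.mem_sdiff, Finset.mem_image, Finset.mem_univ, true_and] at ha hb
  obtain ⟨⟨u0, hu0⟩, hai⟩ := ha
  obtain ⟨⟨v0, hv0⟩, hbi⟩ := hb
  push_neg at hai hbi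
  -- main induction: no layer at distance `s` from `i` contains both colors `a` and `b`.
  have key : ∀ s : ℕ, ∀ g : W, ∀ u v : V, H.dist g i = s →
      c (u, g) = a → c (v, g) = b → False := by
    intro s
    induction s using Nat.strong_induction_on with
    | _ s IH =>
      intro g u v hs hua hvb
      rcases Nat.eq_zero_or_pos s with h0 | hspos
      · subst h0
        have hgi : g = i := (hH.dist_eq_zero_iff).mp hs
        subst hgi
        exact hai u hua
      · have hne : u ≠ v := by
          rintro rfl
          rw [hua] at hvb
          exact hab hvb
        have hDpos : 0 < G.dist u v := hG.pos_dist_of_ne hne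
        obtain ⟨p, hp⟩ := hG.exists_walk_length_eq_dist u v
        obtain ⟨q, hq⟩ := hH.exists_walk_length_eq_dist g i
        set D := G.dist u v with hD
        have hqs : q.length = s := by rw [hq, hs]
        have hx : ∀ k, k ≤ D → G.dist u (p.getVert k) = k ∧ G.dist (p.getVert k) v = D - k := by
          intro k hk
          have h1 := aux_dist_getVert_le hG p k
          have h2 := aux_dist_getVert_right_le hG p k
          rw [hp] at h2
          have h3 : D ≤ G.dist u (p.getVert k) + G.dist (p.getVert k) v := hG.dist_triangle
          omega
        have hh : ∀ t, t ≤ s → H.dist g (q.getVert t) = t ∧ H.dist (q.getVert t) i = s - t := by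
          intro t ht
          have h1 := aux_dist_getVert_le hH q t
          have h2 := aux_dist_getVert_right_le hH q t
          rw [hqs] at h2
          have h3 : s ≤ H.dist g (q.getVert t) + H.dist (q.getVert t) i := by
            rw [← hs]; exact hH.dist_triangle
          omega
        by_cases hsD : s ≤ D
        · -- direct rainbow 3-AP : (v,g), (u,g), (x_{D-s}, i)
          obtain ⟨hz1, hz2⟩ := hx (D - s) (by omega)
          refine hrf ⟨(v, g), (u, g), (p.getVert (D - s), i), ?_, ?_, ?_, ?_⟩
          · rw [boxProd_dist_eq hG hH, boxProd_dist_eq hG hH, SimpleGraph.dist_self,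
              SimpleGraph.dist_comm, hz1, hs, ← hD]
            omega
          · rw [hvb, hua]; exact fun e => hab e.symm
          · rw [hua]; exact fun e => hai _ e.symm
          · rw [hvb]; exact fun e => hbi _ e.symm
        · push_neg at hsD
          -- first staircase: c (x_{D-k}, h_k) = b for all k ≤ D
          have claim2 : ∀ k, k ≤ D → c (p.getVert (D - k), q.getVert k) = b := by
            intro k
            induction k with
            | zero =>
              intro _
              have h1 : p.getVert (D - 0) = v := by
                rw [Nat.sub_zero, ← hp]; exact p.getVert_length
              rw [h1, Walk.getVert_zero]
              exact hvb
            | succ k ihk =>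
              intro hk1
              have hbk := ihk (by omega)
              -- `A := (x_{D-(k+1)}, h_{k+1})` is colored a or b
              have hmem : c (p.getVert (D - (k+1)), q.getVert (k+1)) = a ∨
                  c (p.getVert (D - (k+1)), q.getVert (k+1)) = b := by
                by_contra hcon
                push_neg at hcon
                obtain ⟨hna, hnb⟩ := hcon
                refine hrf ⟨(v, g), (u, g), (p.getVert (D - (k+1)), q.getVert (k+1)),
                  ?_, ?_, ?_, ?_⟩
                · rw [boxProd_dist_eq hG hH, boxProd_dist_eq hG hH, SimpleGraph.dist_self,
                    SimpleGraph.dist_comm, (hx (D - (k+1)) (by omega)).1,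
                    (hh (k+1) (by omega)).1, ← hD]
                  omega
                · rw [hvb, hua]; exact fun e => hab e.symm
                · rw [hua]; exact fun e => hna e.symm
                · rw [hvb]; exact fun e => hnb e.symm
              rcases hmem with hA | hA
              · -- rainbow: (x_{D-(k+1)}, h_{k+1}), (x_{D-k}, i), (x_{D-k}, h_k)
                exfalso
                have hadj : G.Adj (p.getVert (D - (k+1))) (p.getVert (D - k)) := by
                  have he : D - k = (D - (k+1)) + 1 := by omega
                  rw [he]
                  exact p.adj_getVert_succ (by omega)
                have hd1 : G.dist (p.getVert (D - (k+1))) (p.getVert (D - k)) = 1 :=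
                  dist_eq_one_iff_adj.mpr hadj
                have hγ := c (p.getVert (D - k), i)
                refine hrf ⟨(p.getVert (D - (k+1)), q.getVert (k+1)),
                  (p.getVert (D - k), i), (p.getVert (D - k), q.getVert k), ?_, ?_, ?_, ?_⟩
                · rw [boxProd_dist_eq hG hH, boxProd_dist_eq hG hH, SimpleGraph.dist_self,
                    hd1, (hh (k+1) (by omega)).2, SimpleGraph.dist_comm (u := i),
                    (hh k (by omega)).2]
                  omega
                · rw [hA]; exact fun e => hai _ e.symm
                · rw [hbk]; exact fun e => hbi _ e
                · rw [hA, hbk]; exact hab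
              · exact hA
          -- second staircase: c (x_m, h_m) = a for all m ≤ D
          have claim3 : ∀ m, m ≤ D → c (p.getVert m, q.getVert m) = a := by
            intro m
            induction m with
            | zero =>
              intro _
              rw [Walk.getVert_zero, Walk.getVert_zero]
              exact hua
            | succ m ihm =>
              intro hm1
              have ham := ihm (by omega)
              have hmem : c (p.getVert (m+1), q.getVert (m+1)) = a ∨
                  c (p.getVert (m+1), q.getVert (m+1)) = b := by
                by_contra hcon
                push_neg at hcon
                obtain ⟨hna, hnb⟩ := hcon
                refine hrf ⟨(u, g), (v, g), (p.getVert (m+1), q.getVert (m+1)),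
                  ?_, ?_, ?_, ?_⟩
                · rw [boxProd_dist_eq hG hH, boxProd_dist_eq hG hH, SimpleGraph.dist_self,
                    SimpleGraph.dist_comm (u := v), (hx (m+1) (by omega)).2,
                    (hh (m+1) (by omega)).1, ← hD]
                  omega
                · rw [hua, hvb]; exact hab
                · rw [hvb]; exact fun e => hnb e.symm
                · rw [hua]; exact fun e => hna e.symm
              rcases hmem with hA | hA
              · exact hA
              · -- rainbow: (x_m, h_m), (x_m, i), (x_{m+1}, h_{m+1})
                exfalso
                have hadj : G.Adj (p.getVert m) (p.getVert (m+1)) :=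
                  p.adj_getVert_succ (by omega)
                have hd1 : G.dist (p.getVert m) (p.getVert (m+1)) = 1 :=
                  dist_eq_one_iff_adj.mpr hadj
                refine hrf ⟨(p.getVert m, q.getVert m), (p.getVert m, i),
                  (p.getVert (m+1), q.getVert (m+1)), ?_, ?_, ?_, ?_⟩
                · rw [boxProd_dist_eq hG hH, boxProd_dist_eq hG hH, SimpleGraph.dist_self,
                    hd1, (hh m (by omega)).2, SimpleGraph.dist_comm (u := i),
                    (hh (m+1) (by omega)).2]
                  omega
                · rw [ham]; exact fun e => hai _ e.symm
                · rw [hA]; exact fun e => hbi _ e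
                · rw [ham, hA]; exact hab
          -- recurse on layer h_D which contains both colors
          have hpv : p.getVert D = v := by rw [← hp]; exact p.getVert_length
          exact IH (s - D) (by omega) (q.getVert D) v u
            ((hh D (by omega)).2)
            (by have := claim3 D le_rfl; rwa [hpv] at this)
            (by
              have := claim2 D le_rfl
              rwa [Nat.sub_self, Walk.getVert_zero] at this)
  exact key (H.dist j i) j u0 v0 rfl hu0 hv0
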